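/- arXiv:2306.05066 — 2 statements merged into one kernel-verified Lean document; each statement's English description precedes it below -/
import Mathlib

section
/- (Any feasible policy is dominated by a two-threshold policy.) Let Ω be a finite set with probability mass p, group label X : Ω → {0,1}, and benefit Δ : Ω → ℝ with Δ ≥ 0. For any policy π : Ω → [0,1] with budget Σ p(ω)π(ω) ≤ b, there exist thresholds δ⁰, δ¹ ≥ 0 and a (possibly randomized on the boundary) policy π' that treats, within each group x, exactly the units with Δ > δˣ (and a fraction of those with Δ = δˣ), uses the same group-wise budgets P(π' = 1, X = x) = Σ_{ω : X(ω)=x} p(ω)π(ω), and achieves utility Σ p(ω)π'(ω)Δ(ω) ≥ Σ p(ω)π(ω)Δ(ω). -/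
open Finset in
lemma exists_threshold_aux {Ω : Type*} [Fintype Ω] (S : Finset Ω) (p Δ : Ω → ℝ)
    (hp : ∀ ω, 0 ≤ p ω) (hΔ : ∀ ω, 0 ≤ Δ ω) (B : ℝ)
    (hB0 : 0 ≤ B) (hB1 : B ≤ ∑ ω ∈ S, p ω) :
    ∃ δ q : ℝ, 0 ≤ δ ∧ 0 ≤ q ∧ q ≤ 1 ∧
      (∑ ω ∈ S.filter (fun ω => δ < Δ ω), p ω) +
        q * (∑ ω ∈ S.filter (fun ω => Δ ω = δ), p ω) = B := by
  classical
  set V : Finset ℝ := insert 0 (S.image Δ) with hV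
  have hVne : V.Nonempty := ⟨0, mem_insert_self _ _⟩
  set M := V.max' hVne with hM
  have hGM : S.filter (fun ω => M < Δ ω) = ∅ := by
    rw [Finset.filter_eq_empty_iff]
    intro ω hω
    have : Δ ω ∈ V := mem_insert_of_mem (mem_image_of_mem Δ hω)
    exact not_lt.2 (le_max' V _ this)
  set A := V.filter (fun v => (∑ ω ∈ S.filter (fun ω => v < Δ ω), p ω) ≤ B) with hA
  have hAne : A.Nonempty := by
    refine ⟨M, mem_filter.2 ⟨V.max'_mem hVne, ?_⟩⟩
    rw [hGM]; simpa using hB0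
  set δ := A.min' hAne with hδ
  have hδA : δ ∈ A := A.min'_mem hAne
  have hδV : δ ∈ V := (mem_filter.1 hδA).1
  have hδ0 : 0 ≤ δ := by
    rcases mem_insert.1 hδV with h | h
    · exact le_of_eq h.symm
    · obtain ⟨ω, _, hω⟩ := mem_image.1 h
      exact hω ▸ hΔ ω
  have hG : (∑ ω ∈ S.filter (fun ω => δ < Δ ω), p ω) ≤ B := (mem_filter.1 hδA).2
  -- key claim: B ≤ sum over Δ ≥ δ
  have hH : B ≤ ∑ ω ∈ S.filter (fun ω => δ ≤ Δ ω), p ω := by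
    rcases eq_or_lt_of_le hδ0 with h0 | h0
    · have : S.filter (fun ω => δ ≤ Δ ω) = S := by
        apply Finset.filter_true_of_mem
        intro ω _; rw [← h0]; exact hΔ ω
      rw [this]; exact hB1
    · set W := V.filter (fun v => v < δ) with hW
      have hWne : W.Nonempty := ⟨0, mem_filter.2 ⟨mem_insert_self _ _, h0⟩⟩
      set δ' := W.max' hWne with hδ'
      have hδ'W : δ' ∈ W := W.max'_mem hWne
      have hδ'V : δ' ∈ V := (mem_filter.1 hδ'W).1
      have hδ'lt : δ' < δ := (mem_filter.1 hδ'W).2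
      have hδ'A : δ' ∉ A := fun h => absurd (A.min'_le δ' h) (not_le.2 hδ'lt)
      have hGδ' : B < ∑ ω ∈ S.filter (fun ω => δ' < Δ ω), p ω := by
        by_contra h
        exact hδ'A (mem_filter.2 ⟨hδ'V, not_lt.1 h⟩)
      have hsub : S.filter (fun ω => δ' < Δ ω) ⊆ S.filter (fun ω => δ ≤ Δ ω) := by
        intro ω hω
        obtain ⟨hωS, hωlt⟩ := mem_filter.1 hω
        refine mem_filter.2 ⟨hωS, ?_⟩
        by_contra hlt
        have hΔV : Δ ω ∈ V := mem_insert_of_mem (mem_image_of_mem Δ hωS)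
        have : Δ ω ∈ W := mem_filter.2 ⟨hΔV, not_le.1 hlt⟩
        exact absurd (W.le_max' _ this) (not_le.2 hωlt)
      exact le_of_lt (lt_of_lt_of_le hGδ'
        (Finset.sum_le_sum_of_subset_of_nonneg hsub (fun ω _ _ => hp ω)))
  have hsplit : (∑ ω ∈ S.filter (fun ω => δ ≤ Δ ω), p ω) =
      (∑ ω ∈ S.filter (fun ω => δ < Δ ω), p ω) +
      (∑ ω ∈ S.filter (fun ω => Δ ω = δ), p ω) := by
    rw [← Finset.sum_union]
    · apply Finset.sum_congr _ (fun _ _ => rfl)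
      ext ω
      simp only [Finset.mem_union, Finset.mem_filter]
      constructor
      · rintro ⟨h1, h2⟩
        rcases lt_or_eq_of_le h2 with h | h
        · exact Or.inl ⟨h1, h⟩
        · exact Or.inr ⟨h1, h.symm⟩
      · rintro (⟨h1, h2⟩ | ⟨h1, h2⟩)
        · exact ⟨h1, le_of_lt h2⟩
        · exact ⟨h1, le_of_eq h2.symm⟩
    · rw [Finset.disjoint_left]
      intro ω h1 h2
      have := (mem_filter.1 h1).2
      have := (mem_filter.1 h2).2
      simp_all
  set G := ∑ ω ∈ S.filter (fun ω => δ < Δ ω), p ω with hGdef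
  set m := ∑ ω ∈ S.filter (fun ω => Δ ω = δ), p ω with hmdef
  have hm0 : 0 ≤ m := Finset.sum_nonneg (fun ω _ => hp ω)
  have hBm : B ≤ G + m := by rw [← hsplit]; exact hH
  by_cases hm : m = 0
  · refine ⟨δ, 0, hδ0, le_refl 0, zero_le_one, ?_⟩
    rw [← hGdef, ← hmdef]
    have : G = B := le_antisymm hG (by linarith)
    linarith
  · have hmpos : 0 < m := lt_of_le_of_ne hm0 (Ne.symm hm)
    refine ⟨δ, (B - G) / m, hδ0, div_nonneg (by linarith) hm0, ?_, ?_⟩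
    · rw [div_le_one hmpos]; linarith
    · rw [← hGdef, ← hmdef]
      field_simp
      ring

open Classical in
/-- Any budget-feasible policy is dominated by a group-wise (randomized) threshold policy
with the same group-wise budgets. -/
theorem dominated_by_two_threshold_policy {Ω : Type*} [Fintype Ω]
    (p : Ω → ℝ) (hp : ∀ ω, 0 ≤ p ω) (hsum : ∑ ω, p ω = 1)
    (X : Ω → Fin 2) (Δ : Ω → ℝ) (hΔ : ∀ ω, 0 ≤ Δ ω)
    (b : ℝ) (π : Ω → ℝ) (hπ : ∀ ω, π ω ∈ Set.Icc (0:ℝ) 1)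
    (hbudget : (∑ ω, p ω * π ω) ≤ b) :
    ∃ (δ : Fin 2 → ℝ) (q : Fin 2 → ℝ) (π' : Ω → ℝ),
      (∀ x, 0 ≤ δ x) ∧
      (∀ ω, π' ω ∈ Set.Icc (0:ℝ) 1) ∧
      (∀ ω, δ (X ω) < Δ ω → π' ω = 1) ∧
      (∀ ω, Δ ω = δ (X ω) → π' ω = q (X ω)) ∧
      (∀ ω, Δ ω < δ (X ω) → π' ω = 0) ∧
      (∀ x : Fin 2,
        (∑ ω ∈ Finset.univ.filter (fun ω => X ω = x), p ω * π' ω) =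
        (∑ ω ∈ Finset.univ.filter (fun ω => X ω = x), p ω * π ω)) ∧
      (∑ ω, p ω * π ω * Δ ω) ≤ ∑ ω, p ω * π' ω * Δ ω := by
  classical
  have H : ∀ x : Fin 2, ∃ δ q : ℝ, 0 ≤ δ ∧ 0 ≤ q ∧ q ≤ 1 ∧
      (∑ ω ∈ (Finset.univ.filter (fun ω => X ω = x)).filter (fun ω => δ < Δ ω), p ω) +
        q * (∑ ω ∈ (Finset.univ.filter (fun ω => X ω = x)).filter (fun ω => Δ ω = δ), p ω) =
        ∑ ω ∈ Finset.univ.filter (fun ω => X ω = x), p ω * π ω := by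
    intro x
    apply exists_threshold_aux _ p Δ hp hΔ
    · exact Finset.sum_nonneg fun ω _ => mul_nonneg (hp ω) (hπ ω).1
    · apply Finset.sum_le_sum
      intro ω _
      nlinarith [hp ω, (hπ ω).1, (hπ ω).2]
  choose δ q hδ0 hq0 hq1 hkey using H
  set π' : Ω → ℝ := fun ω =>
    if δ (X ω) < Δ ω then 1 else if Δ ω = δ (X ω) then q (X ω) else 0 with hπ'
  have hπ'mem : ∀ ω, π' ω ∈ Set.Icc (0:ℝ) 1 := by
    intro ω
    simp only [hπ']
    split_ifs with h1 h2
    · exact ⟨zero_le_one, le_refl 1⟩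
    · exact ⟨hq0 _, hq1 _⟩
    · exact ⟨le_refl 0, zero_le_one⟩
  have hbudg : ∀ x : Fin 2,
      (∑ ω ∈ Finset.univ.filter (fun ω => X ω = x), p ω * π' ω) =
      (∑ ω ∈ Finset.univ.filter (fun ω => X ω = x), p ω * π ω) := by
    intro x
    have hcong : ∀ ω ∈ Finset.univ.filter (fun ω => X ω = x),
        p ω * π' ω = (if δ x < Δ ω then p ω else 0) +
          q x * (if Δ ω = δ x then p ω else 0) := by
      intro ω hω
      have hx : X ω = x := (Finset.mem_filter.1 hω).2
      simp only [hπ', hx]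
      split_ifs with h1 h2 <;> try ring
      · exact absurd (h2 ▸ h1) (lt_irrefl _)
    rw [Finset.sum_congr rfl hcong, Finset.sum_add_distrib, ← Finset.mul_sum,
      ← Finset.sum_filter, ← Finset.sum_filter]
    exact hkey x
  refine ⟨δ, q, π', hδ0, hπ'mem, ?_, ?_, ?_, hbudg, ?_⟩
  · intro ω h; simp only [hπ', if_pos h]
  · intro ω h
    simp only [hπ']
    rw [if_neg (by rw [h]; exact lt_irrefl _), if_pos h]
  · intro ω h
    simp only [hπ']
    rw [if_neg (not_lt.2 (le_of_lt h)), if_neg (ne_of_lt h)]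
  · -- utility
    have hD : ∀ ω, 0 ≤ p ω * (π' ω - π ω) * (Δ ω - δ (X ω)) := by
      intro ω
      rcases lt_trichotomy (δ (X ω)) (Δ ω) with h | h | h
      · have ha : π' ω = 1 := by simp only [hπ', if_pos h]
        rw [ha]
        exact mul_nonneg (mul_nonneg (hp ω) (by linarith [(hπ ω).2])) (by linarith)
      · rw [← h]; ring_nf; simp [h]
      · have ha : π' ω = 0 := by
          simp only [hπ']
          rw [if_neg (not_lt.2 (le_of_lt h)), if_neg (ne_of_lt h)]
        rw [ha]
        have hre : p ω * (0 - π ω) * (Δ ω - δ (X ω)) =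
            p ω * π ω * (δ (X ω) - Δ ω) := by ring
        rw [hre]
        exact mul_nonneg (mul_nonneg (hp ω) (hπ ω).1) (by linarith)
    have hE : (∑ ω, p ω * (π' ω - π ω) * δ (X ω)) = 0 := by
      rw [← Finset.sum_fiberwise Finset.univ X (fun ω => p ω * (π' ω - π ω) * δ (X ω))]
      apply Finset.sum_eq_zero
      intro x _
      have : ∀ ω ∈ Finset.univ.filter (fun ω => X ω = x),
          p ω * (π' ω - π ω) * δ (X ω) = δ x * (p ω * π' ω - p ω * π ω) := by
        intro ω hω
        rw [(Finset.mem_filter.1 hω).2]; ring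
      rw [Finset.sum_congr rfl this, ← Finset.mul_sum, Finset.sum_sub_distrib, hbudg x]
      ring
    have hsplit : ∀ ω, p ω * π' ω * Δ ω - p ω * π ω * Δ ω =
        p ω * (π' ω - π ω) * (Δ ω - δ (X ω)) + p ω * (π' ω - π ω) * δ (X ω) := by
      intro ω; ring
    have h1 : (∑ ω, (p ω * π' ω * Δ ω - p ω * π ω * Δ ω)) =
        (∑ ω, p ω * (π' ω - π ω) * (Δ ω - δ (X ω))) +
        (∑ ω, p ω * (π' ω - π ω) * δ (X ω)) := by
      rw [← Finset.sum_add_distrib]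
      exact Finset.sum_congr rfl fun ω _ => hsplit ω
    have h2 : 0 ≤ ∑ ω, p ω * (π' ω - π ω) * (Δ ω - δ (X ω)) :=
      Finset.sum_nonneg fun ω _ => hD ω
    have h3 := Finset.sum_sub_distrib (s := (Finset.univ : Finset Ω))
      (f := fun ω => p ω * π' ω * Δ ω) (g := fun ω => p ω * π ω * Δ ω)
    rw [h3, hE] at h1
    linarith
end

section
/- In the cancer-surgery SCM, if W has density 2(1-w) on [0,1] (the female group x₁) and the counterfactual benefit is defined by Δ_C = (1/3)·√(1 - (1-W)²), then Δ_C is distributed identically to Δ = W'/3 where W' has density 2w on [0,1] (the male group x₀). That is, the map w ↦ √(1 - (1-w)²) pushes the density 2(1-w) forward to the density 2w on [0,1]. -/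
open MeasureTheory Set

lemma mapA : Measure.map (fun w : ℝ => w ^ 2)
    ((volume.restrict (Ioo (0:ℝ) 1)).withDensity (fun w => ENNReal.ofReal (2 * w))) =
    volume.restrict (Ioo (0:ℝ) 1) := by
  have hderiv : ∀ x ∈ Ioo (0:ℝ) 1, HasFDerivWithinAt (fun w : ℝ => w ^ 2)
      ((1 : ℝ →L[ℝ] ℝ).smulRight (2 * x)) (Ioo (0:ℝ) 1) x := by
    intro x _
    have h : HasDerivAt (fun w : ℝ => w ^ 2) (2 * x) x := by
      simpa using hasDerivAt_pow 2 x
    exact h.hasFDerivAt.hasFDerivWithinAt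
  have hinj : InjOn (fun w : ℝ => w ^ 2) (Ioo (0:ℝ) 1) := by
    intro a ha b hb h
    simp only at h
    have h1 : (a - b) * (a + b) = 0 := by nlinarith [h]
    rcases mul_eq_zero.1 h1 with h2 | h2
    · linarith
    · exfalso; have := ha.1; have := hb.1; linarith
  have hmeas : Measurable (fun w : ℝ => w ^ 2) := (continuous_pow 2).measurable
  have key := map_withDensity_abs_det_fderiv_eq_addHaar volume measurableSet_Ioo.nullMeasurableSet hderiv hinj
  have himg : (fun w : ℝ => w ^ 2) '' Ioo (0:ℝ) 1 = Ioo (0:ℝ) 1 := by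
    ext y
    constructor
    · rintro ⟨x, hx, rfl⟩
      simp only [mem_Ioo]
      constructor <;> nlinarith [hx.1, hx.2]
    · rintro ⟨hy0, hy1⟩
      exact ⟨Real.sqrt y, ⟨Real.sqrt_pos.2 hy0,
        by simpa using Real.sqrt_lt_sqrt hy0.le hy1⟩, Real.sq_sqrt hy0.le⟩
  have hdens : (fun x : ℝ => ENNReal.ofReal |((1 : ℝ →L[ℝ] ℝ).smulRight (2 * x)).det|)
      =ᵐ[volume.restrict (Ioo (0:ℝ) 1)] (fun w => ENNReal.ofReal (2 * w)) := by
    filter_upwards [ae_restrict_mem measurableSet_Ioo] with x hx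
    rw [ContinuousLinearMap.det_smulRight, ContinuousLinearMap.one_apply, one_mul, abs_of_pos (by linarith [hx.1])]
  rw [withDensity_congr_ae hdens, himg] at key
  exact key

lemma mapB : Measure.map (fun v : ℝ => 1 - (1 - v) ^ 2)
    ((volume.restrict (Ioo (0:ℝ) 1)).withDensity (fun v => ENNReal.ofReal (2 * (1 - v)))) =
    volume.restrict (Ioo (0:ℝ) 1) := by
  have hderiv : ∀ x ∈ Ioo (0:ℝ) 1, HasFDerivWithinAt (fun v : ℝ => 1 - (1 - v) ^ 2)
      ((1 : ℝ →L[ℝ] ℝ).smulRight (2 * (1 - x))) (Ioo (0:ℝ) 1) x := by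
    intro x _
    have h1 : HasDerivAt (fun v : ℝ => (1 - v) ^ 2) (2 * (1 - x) ^ 1 * (-1)) x :=
      (((hasDerivAt_id x).const_sub 1).pow 2)
    have h2 : HasDerivAt (fun v : ℝ => 1 - (1 - v) ^ 2) (2 * (1 - x)) x := by
      have := h1.const_sub 1
      convert this using 1
      · rfl
      · rfl
      ring
    exact h2.hasFDerivAt.hasFDerivWithinAt
  have hinj : InjOn (fun v : ℝ => 1 - (1 - v) ^ 2) (Ioo (0:ℝ) 1) := by
    intro a ha b hb h
    simp only at h
    have h1 : (b - a) * (2 - a - b) = 0 := by nlinarith [h]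
    rcases mul_eq_zero.1 h1 with h2 | h2
    · linarith
    · exfalso; have := ha.2; have := hb.2; linarith
  have hmeas : Measurable (fun v : ℝ => 1 - (1 - v) ^ 2) := by fun_prop
  have key := map_withDensity_abs_det_fderiv_eq_addHaar volume measurableSet_Ioo.nullMeasurableSet hderiv hinj
  have himg : (fun v : ℝ => 1 - (1 - v) ^ 2) '' Ioo (0:ℝ) 1 = Ioo (0:ℝ) 1 := by
    ext y
    constructor
    · rintro ⟨x, hx, rfl⟩
      simp only [mem_Ioo]
      constructor <;> nlinarith [hx.1, hx.2]
    · rintro ⟨hy0, hy1⟩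
      refine ⟨1 - Real.sqrt (1 - y), ⟨?_, ?_⟩, ?_⟩
      · have : Real.sqrt (1 - y) < 1 := by simpa using Real.sqrt_lt_sqrt (by linarith : (0:ℝ) ≤ 1 - y) (show (1:ℝ) - y < 1 by linarith)
        linarith
      · have : 0 < Real.sqrt (1 - y) := Real.sqrt_pos.2 (by linarith)
        linarith
      · simp only
        rw [show (1 : ℝ) - (1 - Real.sqrt (1 - y)) = Real.sqrt (1 - y) by ring,
          Real.sq_sqrt (by linarith)]
        ring
  have hdens : (fun x : ℝ => ENNReal.ofReal |((1 : ℝ →L[ℝ] ℝ).smulRight (2 * (1 - x))).det|)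
      =ᵐ[volume.restrict (Ioo (0:ℝ) 1)] (fun v => ENNReal.ofReal (2 * (1 - v))) := by
    filter_upwards [ae_restrict_mem measurableSet_Ioo] with x hx
    rw [ContinuousLinearMap.det_smulRight, ContinuousLinearMap.one_apply, one_mul, abs_of_pos (by linarith [hx.2])]
  rw [withDensity_congr_ae hdens, himg] at key
  exact key

/-- The map `w ↦ √(1 - (1-w)²)` pushes the density `2(1-w)` on `[0,1]` (female group)
forward to the density `2w` on `[0,1]` (male group): the counterfactual benefit is
distributed like the factual benefit of the `x₀` group. -/
theorem counterfactual_benefit_pushforward :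
    (volume.withDensity
        (Set.indicator (Set.Icc (0:ℝ) 1) (fun v => ENNReal.ofReal (2 * (1 - v))))).map
      (fun v => Real.sqrt (1 - (1 - v) ^ 2)) =
    volume.withDensity
      (Set.indicator (Set.Icc (0:ℝ) 1) (fun w => ENNReal.ofReal (2 * w))) := by
  have hres : volume.restrict (Icc (0:ℝ) 1) = volume.restrict (Ioo (0:ℝ) 1) :=
    (Measure.restrict_congr_set Ioo_ae_eq_Icc).symm
  have hg : Measurable (fun v : ℝ => Real.sqrt (1 - (1 - v) ^ 2)) :=
    (Real.continuous_sqrt.comp (by continuity)).measurable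
  have hh : Measurable (fun u : ℝ => 1 - Real.sqrt (1 - u)) :=
    (by continuity : Continuous (fun u : ℝ => 1 - Real.sqrt (1 - u))).measurable
  have hsqrt : Measurable Real.sqrt := Real.continuous_sqrt.measurable
  rw [withDensity_indicator measurableSet_Icc, withDensity_indicator measurableSet_Icc, hres]
  set μf := (volume.restrict (Ioo (0:ℝ) 1)).withDensity
      (fun v => ENNReal.ofReal (2 * (1 - v))) with hμf
  set ν := (volume.restrict (Ioo (0:ℝ) 1)).withDensity
      (fun w => ENNReal.ofReal (2 * w)) with hν
  -- μf = map h (restrict Ioo)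
  have hac : μf ≪ volume.restrict (Ioo (0:ℝ) 1) := withDensity_absolutelyContinuous _ _
  have hμf_eq : Measure.map (fun u : ℝ => 1 - Real.sqrt (1 - u))
      (volume.restrict (Ioo (0:ℝ) 1)) = μf := by
    rw [← mapB, Measure.map_map hh (by fun_prop)]
    have : ((fun u : ℝ => 1 - Real.sqrt (1 - u)) ∘ (fun v : ℝ => 1 - (1 - v) ^ 2))
        =ᵐ[μf] id := by
      apply hac.ae_eq
      filter_upwards [ae_restrict_mem measurableSet_Ioo] with x hx
      simp only [Function.comp_apply, id_eq]
      rw [show (1:ℝ) - (1 - (1 - x) ^ 2) = (1 - x) ^ 2 by ring,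
        Real.sqrt_sq (by linarith [hx.2])]
      ring
    rw [Measure.map_congr this, Measure.map_id]
  have hν_eq : Measure.map Real.sqrt (volume.restrict (Ioo (0:ℝ) 1)) = ν := by
    rw [← mapA, Measure.map_map hsqrt ((continuous_pow 2).measurable)]
    have hac2 : ν ≪ volume.restrict (Ioo (0:ℝ) 1) := withDensity_absolutelyContinuous _ _
    have : (Real.sqrt ∘ (fun w : ℝ => w ^ 2)) =ᵐ[ν] id := by
      apply hac2.ae_eq
      filter_upwards [ae_restrict_mem measurableSet_Ioo] with x hx
      simp only [Function.comp_apply, id_eq]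
      exact Real.sqrt_sq hx.1.le
    rw [Measure.map_congr this, Measure.map_id]
  rw [← hμf_eq, Measure.map_map hg hh]
  have : ((fun v : ℝ => Real.sqrt (1 - (1 - v) ^ 2)) ∘ (fun u : ℝ => 1 - Real.sqrt (1 - u)))
      =ᵐ[volume.restrict (Ioo (0:ℝ) 1)] Real.sqrt := by
    filter_upwards [ae_restrict_mem measurableSet_Ioo] with u hu
    simp only [Function.comp_apply]
    rw [show (1:ℝ) - (1 - Real.sqrt (1 - u)) = Real.sqrt (1 - u) by ring,
      Real.sq_sqrt (by linarith [hu.2])]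
    norm_num
  rw [Measure.map_congr this, hν_eq]
end
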